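/- Let n ≥ 2, γ ∈ ℝ, and let U be a radially symmetric measurable function on ℝⁿ, U(x) = U(|x|). Then for any x ∈ ℝⁿ with r = |x| > 0, the convolution (|·|^{-γ} * U)(x) = (2^{3-n} ω_{n-1}/r^{n-2}) ∫_0^∞ ρ U(ρ) {∫_{|ρ-r|}^{ρ+r} η^{1-γ} h(η,ρ,r) dη} dρ, where h(η,ρ,r) = {η²-(ρ-r)²}^{(n-3)/2}{(ρ+r)²-η²}^{(n-3)/2}, provided both sides are finite. -/

import Mathlib

open Real MeasureTheory intervalIntegral

open Set Metric

/-- The measure of the unit sphere in `ℝ^{n-1}`. -/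
noncomputable def omegaMinus (n : ℕ) : ℝ :=
  2 * Real.pi ^ (((n : ℝ) - 1) / 2) / Real.Gamma (((n : ℝ) - 1) / 2)

/-- The kernel `h(η,ρ,r)` from John's spherical means identity. -/
noncomputable def hKer (n : ℕ) (η ρ r : ℝ) : ℝ :=
  (η ^ 2 - (ρ - r) ^ 2) ^ (((n : ℝ) - 3) / 2) * ((ρ + r) ^ 2 - η ^ 2) ^ (((n : ℝ) - 3) / 2)

noncomputable section

lemma lintegral_radial (m : ℕ) (f : ℝ → ENNReal) (hf : Measurable f) :
    ∫⁻ w : EuclideanSpace ℝ (Fin (m+1)), f ‖w‖ =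
      (m+1 : ℕ) * volume (ball (0 : EuclideanSpace ℝ (Fin (m+1))) 1) *
        ∫⁻ s in Set.Ioi (0:ℝ), ENNReal.ofReal (s ^ m) * f s := by
  set E := EuclideanSpace ℝ (Fin (m+1))
  have hfin : Module.finrank ℝ E = m + 1 := finrank_euclideanSpace_fin
  have h0 : ∫⁻ w : E, f ‖w‖ = ∫⁻ w in ({0}ᶜ : Set E), f ‖w‖ := by
    rw [MeasureTheory.restrict_compl_singleton]
  rw [h0, ← lintegral_subtype_comap (measurableSet_singleton (0:E)).compl]
  have mp := (volume : Measure E).measurePreserving_homeomorphUnitSphereProd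
  have hmeas : Measurable (fun p : sphere (0:E) 1 × Ioi (0:ℝ) => f p.2.1) :=
    (hf.comp measurable_subtype_coe).comp measurable_snd
  have key : (∫⁻ w : ({0}ᶜ : Set E), f ‖w.1‖ ∂(Measure.comap Subtype.val volume)) =
      ∫⁻ b : sphere (0:E) 1 × Ioi (0:ℝ), f b.2.1
        ∂((volume : Measure E).toSphere.prod (Measure.volumeIoiPow (Module.finrank ℝ E - 1))) :=
    by rw [← mp.lintegral_comp hmeas]; simp
  rw [key, MeasureTheory.lintegral_prod _ hmeas.aemeasurable]
  simp only [MeasureTheory.lintegral_const, Measure.toSphere_apply_univ]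
  have aux : ∫⁻ s : (Ioi (0:ℝ)), f s.1 ∂(Measure.volumeIoiPow m) =
      ∫⁻ s in Set.Ioi (0:ℝ), ENNReal.ofReal (s ^ m) * f s := by
    have hd : Measurable (fun r : Ioi (0:ℝ) => ENNReal.ofReal (r.1 ^ m)) :=
      ENNReal.measurable_ofReal.comp ((measurable_subtype_coe).pow_const m)
    have hg : Measurable (fun s : Ioi (0:ℝ) => f s.1) := hf.comp measurable_subtype_coe
    rw [Measure.volumeIoiPow, lintegral_withDensity_eq_lintegral_mul _ hd hg,
      ← lintegral_subtype_comap measurableSet_Ioi]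
    rfl
  rw [hfin]
  simp only [Nat.add_sub_cancel] at *
  rw [aux, mul_comm]


lemma omega_eq (m : ℕ) :
    ((m + 1 : ℕ) : ℝ) * (volume (ball (0 : EuclideanSpace ℝ (Fin (m+1))) 1)).toReal
      = omegaMinus (m+2) := by
  rw [EuclideanSpace.volume_ball]
  simp only [Fintype.card_fin, ENNReal.ofReal_one, one_pow, one_mul]
  rw [ENNReal.toReal_ofReal (by positivity)]
  have h1 : ((m:ℝ)+1)/2 ≠ 0 := by positivity
  have hG : Real.Gamma (((m:ℝ)+1)/2 + 1) = (((m:ℝ)+1)/2) * Real.Gamma (((m:ℝ)+1)/2) := by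
    rw [Real.Gamma_add_one h1]
  have hsq : Real.sqrt π ^ (m+1) = π ^ (((m:ℝ)+1)/2) := by
    rw [Real.sqrt_eq_rpow, ← Real.rpow_natCast (π ^ ((1:ℝ)/2)) (m+1), ← Real.rpow_mul pi_pos.le]
    norm_num
    ring_nf
  have hGpos : Real.Gamma (((m:ℝ)+1)/2) ≠ 0 :=
    (Real.Gamma_pos_of_pos (by positivity)).ne'
  rw [omegaMinus]
  push_cast
  rw [show ((m:ℝ) + 1)/2 + 1 = ((m:ℝ)+1)/2 + 1 from rfl] at hG ⊢
  rw [show ((m:ℝ) + 2 - 1)/2 = ((m:ℝ)+1)/2 by ring]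
  rw [hG, hsq]
  field_simp

lemma integral_radial (m : ℕ) (f : ℝ → ℝ) :
    ∫ w : EuclideanSpace ℝ (Fin (m+1)), f ‖w‖ =
      omegaMinus (m+2) * ∫ s in Set.Ioi (0:ℝ), s ^ m * f s := by
  rw [MeasureTheory.integral_fun_norm_addHaar (volume) f]
  have hfin : Module.finrank ℝ (EuclideanSpace ℝ (Fin (m+1))) = m + 1 :=
    finrank_euclideanSpace_fin
  rw [hfin]
  rw [nsmul_eq_mul, smul_eq_mul, ← mul_assoc, measureReal_def, omega_eq m]
  simp only [Nat.add_sub_cancel, smul_eq_mul]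


noncomputable def Psi (m : ℕ) : (ℝ × EuclideanSpace ℝ (Fin (m+1))) ≃ᵐ EuclideanSpace ℝ (Fin (m+2)) :=
  ((MeasurableEquiv.refl ℝ).prodCongr ((MeasurableEquiv.toLp 2 (Fin (m+1) → ℝ)).symm)).trans
    (((MeasurableEquiv.piFinSuccAbove (fun _ : Fin (m+2) => ℝ) 0).symm).trans
      ((MeasurableEquiv.toLp 2 (Fin (m+2) → ℝ)).symm).symm)

lemma Psi_measurePreserving (m : ℕ) : MeasurePreserving (Psi m) volume volume := by
  have h1 : MeasurePreserving
      (⇑((MeasurableEquiv.refl ℝ).prodCongr ((MeasurableEquiv.toLp 2 (Fin (m+1) → ℝ)).symm)))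
      volume volume := by
    rw [Measure.volume_eq_prod, Measure.volume_eq_prod]
    exact (MeasurePreserving.id volume).prod
      (EuclideanSpace.volume_preserving_symm_measurableEquiv_toLp (Fin (m+1)))
  have h2 := (volume_preserving_piFinSuccAbove (fun _ : Fin (m+2) => ℝ) 0).symm
  have h3 := (EuclideanSpace.volume_preserving_symm_measurableEquiv_toLp (Fin (m+2))).symm
  exact (h3.comp h2).comp h1

lemma Psi_apply_coord (m : ℕ) (p : ℝ × EuclideanSpace ℝ (Fin (m+1))) :
    (Psi m p) 0 = p.1 ∧ ∀ j : Fin (m+1), Psi m p (Fin.succ j) = p.2 j := by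
  constructor
  · rfl
  · intro j
    show (Fin.insertNth 0 p.1 (fun j => p.2 j) : Fin (m+2) → ℝ) (Fin.succ j) = p.2 j
    simpa using Fin.insertNth_apply_succAbove (i := (0 : Fin (m+2))) (x := p.1)
      (p := fun _ => (0:ℝ)) j

lemma sumsq (m : ℕ) (w : EuclideanSpace ℝ (Fin (m+1))) :
    ∑ j : Fin (m+1), (w j)^2 = ‖w‖^2 := by
  rw [EuclideanSpace.norm_eq, Real.sq_sqrt (by positivity)]
  simp [sq_abs]

lemma norm_Psi (m : ℕ) (p : ℝ × EuclideanSpace ℝ (Fin (m+1))) :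
    ‖Psi m p‖ = Real.sqrt (p.1^2 + ‖p.2‖^2) := by
  rw [EuclideanSpace.norm_eq]
  congr 1
  rw [Fin.sum_univ_succ]
  simp only [Real.norm_eq_abs, sq_abs, (Psi_apply_coord m p).1,
    fun j => (Psi_apply_coord m p).2 j]
  rw [sumsq]

lemma norm_sub_Psi (m : ℕ) (r : ℝ) (p : ℝ × EuclideanSpace ℝ (Fin (m+1))) :
    ‖r • EuclideanSpace.single (0 : Fin (m+2)) (1:ℝ) - Psi m p‖ =
      Real.sqrt ((r - p.1)^2 + ‖p.2‖^2) := by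
  rw [EuclideanSpace.norm_eq]
  congr 1
  rw [Fin.sum_univ_succ]
  have h0 : (r • EuclideanSpace.single (0 : Fin (m+2)) (1:ℝ) - Psi m p) 0 = r - p.1 := by
    simp [(Psi_apply_coord m p).1]
  have hj : ∀ j : Fin (m+1),
      (r • EuclideanSpace.single (0 : Fin (m+2)) (1:ℝ) - Psi m p) (Fin.succ j) = - p.2 j := by
    intro j
    simp [(Psi_apply_coord m p).2 j, Fin.succ_ne_zero, EuclideanSpace.single_apply]
  simp only [Real.norm_eq_abs, sq_abs, h0, fun j => hj j]
  simp [sumsq]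

lemma rotate_integral (m : ℕ) (x : EuclideanSpace ℝ (Fin (m+2))) (hx : 0 < ‖x‖)
    (H : EuclideanSpace ℝ (Fin (m+2)) → ℝ) :
    (∫ y, H y) = ∫ y, H (Submodule.reflection (ℝ ∙ (x - ‖x‖ • EuclideanSpace.single (0 : Fin (m+2)) (1:ℝ)))ᗮ y) := by
  set f := Submodule.reflection (ℝ ∙ (x - ‖x‖ • EuclideanSpace.single (0 : Fin (m+2)) (1:ℝ)))ᗮ
  exact (f.measurePreserving.integral_comp f.toHomeomorph.measurableEmbedding H).symm

lemma rotate_integrable (m : ℕ) (x : EuclideanSpace ℝ (Fin (m+2)))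
    (H : EuclideanSpace ℝ (Fin (m+2)) → ℝ) (h : Integrable H) :
    Integrable (fun y => H (Submodule.reflection (ℝ ∙ (x - ‖x‖ • EuclideanSpace.single (0 : Fin (m+2)) (1:ℝ)))ᗮ y)) := by
  set f := Submodule.reflection (ℝ ∙ (x - ‖x‖ • EuclideanSpace.single (0 : Fin (m+2)) (1:ℝ)))ᗮ
  exact (f.measurePreserving.integrable_comp_emb f.toHomeomorph.measurableEmbedding).mpr h

lemma rot_symm_apply (m : ℕ) (x : EuclideanSpace ℝ (Fin (m+2))) (hx : 0 < ‖x‖) :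
    (Submodule.reflection (ℝ ∙ (x - ‖x‖ • EuclideanSpace.single (0 : Fin (m+2)) (1:ℝ)))ᗮ).symm x
      = ‖x‖ • EuclideanSpace.single (0 : Fin (m+2)) (1:ℝ) := by
  rw [Submodule.reflection_symm]
  apply Submodule.reflection_sub
  rw [norm_smul, EuclideanSpace.norm_single, Real.norm_eq_abs, abs_of_pos hx]
  simp

lemma rot_norm_sub (m : ℕ) (x y : EuclideanSpace ℝ (Fin (m+2))) (hx : 0 < ‖x‖) :
    ‖x - Submodule.reflection (ℝ ∙ (x - ‖x‖ • EuclideanSpace.single (0 : Fin (m+2)) (1:ℝ)))ᗮ y‖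
      = ‖‖x‖ • EuclideanSpace.single (0 : Fin (m+2)) (1:ℝ) - y‖ := by
  set f := Submodule.reflection (ℝ ∙ (x - ‖x‖ • EuclideanSpace.single (0 : Fin (m+2)) (1:ℝ)))ᗮ
  have h1 : x - f y = f (f.symm x - y) := by
    rw [map_sub, LinearIsometryEquiv.apply_symm_apply]
  rw [h1, f.norm_map, rot_symm_apply m x hx]

noncomputable section

def tf (r : ℝ) (p : ℝ × ℝ) : ℝ := (r^2 + p.1^2 - p.2^2)/(2*r)

def qf (r : ℝ) (p : ℝ × ℝ) : ℝ := p.1^2 - tf r p^2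

def Phi (r : ℝ) (p : ℝ × ℝ) : ℝ × ℝ := (tf r p, Real.sqrt (qf r p))

def Dset (r : ℝ) : Set (ℝ × ℝ) := {p | 0 < p.1 ∧ |p.1 - r| < p.2 ∧ p.2 < p.1 + r}

lemma Dset_measurable (r : ℝ) : MeasurableSet (Dset r) := by
  have h1 : MeasurableSet {p : ℝ × ℝ | 0 < p.1} := measurableSet_lt measurable_const measurable_fst
  have h2 : MeasurableSet {p : ℝ × ℝ | |p.1 - r| < p.2} :=
    measurableSet_lt ((measurable_fst.sub measurable_const).abs) measurable_snd
  have h3 : MeasurableSet {p : ℝ × ℝ | p.2 < p.1 + r} :=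
    measurableSet_lt measurable_snd (measurable_fst.add measurable_const)
  exact (h1.inter (h2.inter h3))

lemma eta_pos {r : ℝ} {p : ℝ × ℝ} (hp : p ∈ Dset r) : 0 < p.2 :=
  lt_of_le_of_lt (abs_nonneg _) hp.2.1

lemma A_pos {r : ℝ} {p : ℝ × ℝ} (hp : p ∈ Dset r) : 0 < p.2^2 - (p.1 - r)^2 := by
  have h := hp.2.1
  have h2 := abs_nonneg (p.1 - r)
  have h3 : |p.1 - r|^2 = (p.1 - r)^2 := sq_abs _
  nlinarith

lemma B_pos {r : ℝ} {p : ℝ × ℝ} (hp : p ∈ Dset r) : 0 < (p.1 + r)^2 - p.2^2 := by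
  have h := hp.2.2
  have h2 := eta_pos hp
  nlinarith

lemma qf_eq (r : ℝ) (hr : r ≠ 0) (p : ℝ × ℝ) :
    qf r p = ((p.2^2 - (p.1 - r)^2) * ((p.1 + r)^2 - p.2^2))/(4*r^2) := by
  unfold qf tf
  field_simp
  ring

lemma qf_pos {r : ℝ} (hr : 0 < r) {p : ℝ × ℝ} (hp : p ∈ Dset r) : 0 < qf r p := by
  rw [qf_eq r hr.ne' p]
  have := A_pos hp
  have := B_pos hp
  positivity

def Mder (r : ℝ) (p : ℝ × ℝ) : ℝ × ℝ →L[ℝ] ℝ × ℝ :=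
  LinearMap.toContinuousLinearMap (Matrix.toLin (Module.Basis.finTwoProd ℝ) (Module.Basis.finTwoProd ℝ)
    !![p.1/r, -(p.2/r);
       p.1*(r - tf r p)/(r * Real.sqrt (qf r p)), tf r p * p.2/(r * Real.sqrt (qf r p))])

lemma Mder_det (r : ℝ) (hr : r ≠ 0) (p : ℝ × ℝ) (hs : Real.sqrt (qf r p) ≠ 0) :
    (Mder r p).det = p.1 * p.2 / (r * Real.sqrt (qf r p)) := by
  unfold Mder
  rw [ContinuousLinearMap.det, LinearMap.coe_toContinuousLinearMap, LinearMap.det_toLin,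
    Matrix.det_fin_two_of]
  field_simp
  ring

lemma Mder_apply (r : ℝ) (p v : ℝ × ℝ) :
    Mder r p v = (p.1/r * v.1 + -(p.2/r) * v.2,
      p.1*(r - tf r p)/(r * Real.sqrt (qf r p)) * v.1 + tf r p * p.2/(r * Real.sqrt (qf r p)) * v.2) := by
  unfold Mder
  simp only [LinearMap.coe_toContinuousLinearMap']
  exact Matrix.toLin_finTwoProd_apply _ _ _ _ v

lemma Phi_hasFDeriv {r : ℝ} (hr : 0 < r) {p : ℝ × ℝ} (hp : p ∈ Dset r) :
    HasFDerivAt (Phi r) (Mder r p) p := by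
  have hq : 0 < qf r p := qf_pos hr hp
  set fst := ContinuousLinearMap.fst ℝ ℝ ℝ with hfstdef
  set snd := ContinuousLinearMap.snd ℝ ℝ ℝ with hsnddef
  have hfst : HasFDerivAt (fun q : ℝ × ℝ => q.1) fst p := hasFDerivAt_fst
  have hsnd : HasFDerivAt (fun q : ℝ × ℝ => q.2) snd p := hasFDerivAt_snd
  have hfst2 : HasFDerivAt (fun q : ℝ × ℝ => q.1^2) ((2 * p.1 ^ 1) • fst) p := by
    have := (hasDerivAt_pow 2 p.1).comp_hasFDerivAt p hfst
    simpa [Function.comp_def] using this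
  have hsnd2 : HasFDerivAt (fun q : ℝ × ℝ => q.2^2) ((2 * p.2 ^ 1) • snd) p := by
    have := (hasDerivAt_pow 2 p.2).comp_hasFDerivAt p hsnd
    simpa [Function.comp_def] using this
  have h1 : HasFDerivAt (fun q : ℝ × ℝ => r^2 + q.1^2 - q.2^2)
      (((2 * p.1 ^ 1) • fst) - (2 * p.2 ^ 1) • snd) p := by
    have := ((hasFDerivAt_const (r^2) p).add hfst2).sub hsnd2
    simpa [Pi.add_def, Pi.sub_def] using this
  set T' : ℝ × ℝ →L[ℝ] ℝ := (2*r)⁻¹ • (((2 * p.1 ^ 1) • fst) - (2 * p.2 ^ 1) • snd) with hT'def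
  have hT : HasFDerivAt (tf r) T' p := by
    have h2 := h1.const_smul ((2*r)⁻¹)
    have h3 : (fun q : ℝ × ℝ => (2*r)⁻¹ • (r^2 + q.1^2 - q.2^2)) = tf r := by
      funext q; show (2*r)⁻¹ * _ = _; unfold tf; field_simp
    rw [show ((2*r)⁻¹ • fun q : ℝ × ℝ => r^2 + q.1^2 - q.2^2) =
      fun q => (2*r)⁻¹ • (r^2 + q.1^2 - q.2^2) from rfl, h3] at h2
    exact h2
  have hT2 : HasFDerivAt (fun q : ℝ × ℝ => tf r q ^ 2) ((2 * tf r p ^ 1) • T') p := by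
    have := (hasDerivAt_pow 2 (tf r p)).comp_hasFDerivAt p hT
    simpa [Function.comp_def] using this
  have hQ : HasFDerivAt (fun q => qf r q)
      ((((2:ℝ) * p.1 ^ 1) • fst) - ((2:ℝ) * tf r p ^ 1) • T') p := hfst2.sub hT2
  have hS : HasFDerivAt (fun q => Real.sqrt (qf r q))
      ((1 / (2 * Real.sqrt (qf r p))) • ((((2:ℝ) * p.1 ^ 1) • fst) - ((2:ℝ) * tf r p ^ 1) • T')) p :=
    (Real.hasDerivAt_sqrt hq.ne').comp_hasFDerivAt p hQ
  have hD := hT.prodMk hS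
  have hs : Real.sqrt (qf r p) ≠ 0 := (Real.sqrt_pos.mpr hq).ne'
  have heq : (T'.prod ((1 / (2 * Real.sqrt (qf r p))) •
      ((((2:ℝ) * p.1 ^ 1) • fst) - ((2:ℝ) * tf r p ^ 1) • T'))) = Mder r p := by
    apply ContinuousLinearMap.ext
    intro v
    rw [Mder_apply]
    apply Prod.ext <;>
      simp only [ContinuousLinearMap.prod_apply, hT'def, ContinuousLinearMap.smul_apply,
        ContinuousLinearMap.sub_apply, ContinuousLinearMap.coe_fst', hfstdef, hsnddef,
        ContinuousLinearMap.coe_snd', smul_eq_mul] <;>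
      · field_simp
        ring
  rw [← heq]
  exact hD

lemma Phi_fst_sq {r : ℝ} (hr : 0 < r) {p : ℝ × ℝ} (hp : p ∈ Dset r) :
    p.1^2 = (tf r p)^2 + Real.sqrt (qf r p)^2 := by
  rw [Real.sq_sqrt (qf_pos hr hp).le]
  unfold qf
  ring

lemma Phi_snd_sq {r : ℝ} (hr : 0 < r) {p : ℝ × ℝ} (hp : p ∈ Dset r) :
    p.2^2 = (r - tf r p)^2 + Real.sqrt (qf r p)^2 := by
  rw [Real.sq_sqrt (qf_pos hr hp).le]
  unfold qf tf
  field_simp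
  ring

lemma Phi_injOn {r : ℝ} (hr : 0 < r) : Set.InjOn (Phi r) (Dset r) := by
  intro p hp q hq h
  have h1 : tf r p = tf r q := congrArg Prod.fst h
  have h2 : Real.sqrt (qf r p) = Real.sqrt (qf r q) := congrArg Prod.snd h
  have hp1 : p.1^2 = q.1^2 := by
    rw [Phi_fst_sq hr hp, h1, h2, ← Phi_fst_sq hr hq]
  have hP1 : p.1 = q.1 := by nlinarith [hp.1, hq.1]
  have hp2 : p.2^2 = q.2^2 := by
    rw [Phi_snd_sq hr hp, h1, h2, ← Phi_snd_sq hr hq]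
  have : p.2 = q.2 := by nlinarith [eta_pos hp, eta_pos hq]
  exact Prod.ext hP1 this

lemma Phi_image {r : ℝ} (hr : 0 < r) :
    Phi r '' Dset r = Set.univ ×ˢ Set.Ioi (0:ℝ) := by
  apply Set.Subset.antisymm
  · rintro _ ⟨p, hp, rfl⟩
    exact ⟨trivial, Real.sqrt_pos.mpr (qf_pos hr hp)⟩
  · rintro ⟨t, s⟩ ⟨-, hs⟩
    simp only [Set.mem_Ioi] at hs
    refine ⟨(Real.sqrt (t^2 + s^2), Real.sqrt ((r-t)^2 + s^2)), ?_, ?_⟩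
    · have hρ : 0 < Real.sqrt (t^2 + s^2) := Real.sqrt_pos.mpr (by positivity)
      have hρsq : Real.sqrt (t^2+s^2)^2 = t^2 + s^2 := Real.sq_sqrt (by positivity)
      have hηsq : Real.sqrt ((r-t)^2+s^2)^2 = (r-t)^2 + s^2 := Real.sq_sqrt (by positivity)
      have hη : 0 ≤ Real.sqrt ((r-t)^2 + s^2) := Real.sqrt_nonneg _
      have htρ : |t| < Real.sqrt (t^2 + s^2) := by
        rw [← Real.sqrt_sq_eq_abs]
        exact Real.sqrt_lt_sqrt (sq_nonneg t) (by nlinarith)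
      have habs := abs_lt.mp htρ
      have hprod1 : 0 < r * (Real.sqrt (t^2+s^2) - t) := mul_pos hr (by linarith [habs.2])
      have hprod2 : 0 < r * (Real.sqrt (t^2+s^2) + t) := mul_pos hr (by linarith [habs.1])
      refine ⟨hρ, ?_, ?_⟩
      · have hlt : (Real.sqrt (t^2+s^2) - r)^2 < Real.sqrt ((r-t)^2+s^2)^2 := by
          rw [hηsq]; nlinarith [hprod1, hρsq]
        have := abs_nonneg (Real.sqrt (t^2+s^2) - r)
        nlinarith [sq_abs (Real.sqrt (t^2+s^2) - r)]
      · have hlt : Real.sqrt ((r-t)^2+s^2)^2 < (Real.sqrt (t^2+s^2) + r)^2 := by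
          rw [hηsq]; nlinarith [hprod2, hρsq]
        nlinarith
    · have hρsq : Real.sqrt (t^2+s^2)^2 = t^2 + s^2 := Real.sq_sqrt (by positivity)
      have hηsq : Real.sqrt ((r-t)^2+s^2)^2 = (r-t)^2 + s^2 := Real.sq_sqrt (by positivity)
      have ht : tf r (Real.sqrt (t^2 + s^2), Real.sqrt ((r-t)^2 + s^2)) = t := by
        unfold tf
        simp only
        rw [hρsq, hηsq]
        field_simp
        ring
      have hq : qf r (Real.sqrt (t^2 + s^2), Real.sqrt ((r-t)^2 + s^2)) = s^2 := by
        unfold qf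
        rw [ht]
        simp only
        rw [hρsq]
        ring
      unfold Phi
      rw [ht, hq, Real.sqrt_sq hs.le]

lemma cov_integral {r : ℝ} (hr : 0 < r) (g : ℝ × ℝ → ℝ) :
    ∫ p in Set.univ ×ˢ Set.Ioi (0:ℝ), g p = ∫ p in Dset r, |(Mder r p).det| • g (Phi r p) := by
  rw [← Phi_image hr]
  exact integral_image_eq_integral_abs_det_fderiv_smul volume (Dset_measurable r)
    (fun p hp => (Phi_hasFDeriv hr hp).hasFDerivWithinAt) (Phi_injOn hr) g

lemma cov_integrableOn {r : ℝ} (hr : 0 < r) (g : ℝ × ℝ → ℝ)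
    (h : IntegrableOn g (Set.univ ×ˢ Set.Ioi (0:ℝ))) :
    IntegrableOn (fun p => |(Mder r p).det| • g (Phi r p)) (Dset r) := by
  rw [← Phi_image hr] at h
  exact (integrableOn_image_iff_integrableOn_abs_det_fderiv_smul volume (Dset_measurable r)
    (fun p hp => (Phi_hasFDeriv hr hp).hasFDerivWithinAt) (Phi_injOn hr) g).mp h


lemma sqrt_qf_eq {r : ℝ} (hr : 0 < r) {p : ℝ × ℝ} (hp : p ∈ Dset r) :
    Real.sqrt (qf r p) =
      Real.sqrt (p.2^2 - (p.1-r)^2) * Real.sqrt ((p.1+r)^2 - p.2^2) / (2*r) := by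
  have hA := A_pos hp
  have hB := B_pos hp
  have h1 : qf r p = (Real.sqrt (p.2^2 - (p.1-r)^2) * Real.sqrt ((p.1+r)^2 - p.2^2) / (2*r))^2 := by
    rw [div_pow, mul_pow, Real.sq_sqrt hA.le, Real.sq_sqrt hB.le, qf_eq r hr.ne' p]
    ring_nf
  rw [h1, Real.sqrt_sq (by positivity)]

lemma key_integrand {r γ : ℝ} (hr : 0 < r) (m : ℕ) (U : ℝ → ℝ) {p : ℝ × ℝ} (hp : p ∈ Dset r) :
    |(Mder r p).det| •
      (Real.sqrt (qf r p) ^ m *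
        (Real.sqrt ((r - tf r p)^2 + Real.sqrt (qf r p)^2) ^ (-γ) *
          U (Real.sqrt ((tf r p)^2 + Real.sqrt (qf r p)^2)))) =
      (2:ℝ) ^ ((1:ℝ) - (m:ℝ)) * r ^ (-(m:ℝ)) *
        (p.1 * U p.1 * (p.2 ^ ((1:ℝ)-γ) * hKer (m+2) p.2 p.1 r)) := by
  have hρ : 0 < p.1 := hp.1
  have hη := eta_pos hp
  have hq := qf_pos hr hp
  have hs : 0 < Real.sqrt (qf r p) := Real.sqrt_pos.mpr hq
  set s := Real.sqrt (qf r p) with hsdef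
  -- the arguments of the square roots
  have h1 : Real.sqrt ((r - tf r p)^2 + s^2) = p.2 := by
    rw [← Phi_snd_sq hr hp, Real.sqrt_sq hη.le]
  have h2 : Real.sqrt ((tf r p)^2 + s^2) = p.1 := by
    rw [← Phi_fst_sq hr hp, Real.sqrt_sq hρ.le]
  rw [h1, h2, Mder_det r hr.ne' p hs.ne', smul_eq_mul,
    abs_of_pos (by positivity : (0:ℝ) < p.1 * p.2 / (r * s))]
  -- powers of s
  have hA := A_pos hp
  have hB := B_pos hp
  set A := p.2^2 - (p.1-r)^2
  set B := (p.1+r)^2 - p.2^2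
  have hX : s ^ m = s ^ ((m:ℝ) - 1) * s := by
    rw [← Real.rpow_natCast s m, ← Real.rpow_add_one hs.ne']
    norm_num
  have hsm : s ^ ((m:ℝ)-1) =
      A ^ (((m:ℝ)-1)/2) * B ^ (((m:ℝ)-1)/2) * (2*r) ^ ((1:ℝ)-(m:ℝ)) := by
    rw [hsdef, sqrt_qf_eq hr hp, Real.div_rpow (by positivity) (by positivity),
      Real.mul_rpow (Real.sqrt_nonneg _) (Real.sqrt_nonneg _),
      Real.sqrt_eq_rpow, Real.sqrt_eq_rpow,
      ← Real.rpow_mul hA.le, ← Real.rpow_mul hB.le]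
    rw [div_eq_mul_inv _ ((2*r) ^ ((m:ℝ)-1)), ← Real.rpow_neg (by positivity : (0:ℝ) ≤ 2*r)]
    ring_nf
  have hker : hKer (m+2) p.2 p.1 r = A ^ (((m:ℝ)-1)/2) * B ^ (((m:ℝ)-1)/2) := by
    unfold hKer
    norm_num
    push_cast
    ring_nf
    simp only [A, B]
    ring_nf
  have h2r : (2*r : ℝ) ^ ((1:ℝ)-(m:ℝ)) = 2 ^ ((1:ℝ)-(m:ℝ)) * r ^ ((1:ℝ)-(m:ℝ)) :=
    Real.mul_rpow (by norm_num) hr.le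
  have hrr : r ^ ((1:ℝ)-(m:ℝ)) * r⁻¹ = r ^ (-(m:ℝ)) := by
    rw [← Real.rpow_neg_one r, ← Real.rpow_add hr]
    congr 1
    ring
  have hη1 : p.2 ^ ((1:ℝ)-γ) = p.2 * p.2 ^ (-γ) := by
    rw [show (1:ℝ) - γ = 1 + (-γ) by ring, Real.rpow_add hη, Real.rpow_one]
  rw [hX, hsm, hker, hη1, h2r]
  field_simp
  rw [← hrr]
  field_simp





lemma prod_integrableOn (m : ℕ) (G : ℝ × ℝ → ℝ) (hG : Measurable G)
    (H : Integrable (fun q : ℝ × EuclideanSpace ℝ (Fin (m+1)) => G (q.1, ‖q.2‖))) :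
    IntegrableOn (fun p : ℝ × ℝ => p.2 ^ m * G p) (Set.univ ×ˢ Set.Ioi (0:ℝ)) := by
  set C : ENNReal := (m+1 : ℕ) * volume (ball (0 : EuclideanSpace ℝ (Fin (m+1))) 1) with hC
  have hC0 : C ≠ 0 := by
    rw [hC]
    exact mul_ne_zero (by simp) (measure_ball_pos volume _ one_pos).ne'
  have hCtop : C ≠ ⊤ := by
    rw [hC]
    exact ENNReal.mul_ne_top (ENNReal.natCast_ne_top _) measure_ball_lt_top.ne
  have hmeas : Measurable (fun p : ℝ × ℝ => p.2 ^ m * G p) :=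
    (measurable_snd.pow_const m).mul hG
  constructor
  · exact hmeas.aestronglyMeasurable.restrict
  · rw [hasFiniteIntegral_def]
    simp only [enorm_eq_nnnorm]
    have hres : (volume : Measure (ℝ × ℝ)).restrict (Set.univ ×ˢ Set.Ioi (0:ℝ)) =
        (volume : Measure ℝ).prod ((volume : Measure ℝ).restrict (Set.Ioi (0:ℝ))) := by
      rw [Measure.volume_eq_prod, ← Measure.prod_restrict, Measure.restrict_univ]
    rw [hres]
    have hmeas2 : Measurable (fun p : ℝ × ℝ => (‖p.2 ^ m * G p‖₊ : ENNReal)) :=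
      hmeas.nnnorm.coe_nnreal_ennreal
    rw [MeasureTheory.lintegral_prod _ hmeas2.aemeasurable]
    have hinner : ∀ t : ℝ, ∫⁻ s in Set.Ioi (0:ℝ), (‖s ^ m * G (t, s)‖₊ : ENNReal) =
        C⁻¹ * ∫⁻ w : EuclideanSpace ℝ (Fin (m+1)), (‖G (t, ‖w‖)‖₊ : ENNReal) := by
      intro t
      have hmg : Measurable (fun s => (‖G (t, s)‖₊ : ENNReal)) :=
        (hG.comp measurable_prodMk_left).nnnorm.coe_nnreal_ennreal
      rw [lintegral_radial m _ hmg, ← mul_assoc, ENNReal.inv_mul_cancel hC0 hCtop, one_mul]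
      refine setLIntegral_congr_fun measurableSet_Ioi ?_
      intro s hs
      beta_reduce
      rw [nnnorm_mul, ENNReal.coe_mul]
      congr 1
      exact (Real.enorm_eq_ofReal (pow_nonneg (le_of_lt (Set.mem_Ioi.mp hs)) m))
    have hmeas3 : Measurable (fun z : ℝ × EuclideanSpace ℝ (Fin (m+1)) => (‖G (z.1, ‖z.2‖)‖₊ : ENNReal)) := by
      apply Measurable.coe_nnreal_ennreal
      apply Measurable.nnnorm
      exact hG.comp (measurable_fst.prodMk measurable_snd.norm)
    simp_rw [hinner]
    have hψ : Measurable (fun t : ℝ => ∫⁻ w : EuclideanSpace ℝ (Fin (m+1)), (‖G (t, ‖w‖)‖₊ : ENNReal)) :=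
      Measurable.lintegral_prod_right hmeas3
    rw [lintegral_const_mul _ hψ]
    have hfin := H.2
    rw [hasFiniteIntegral_def] at hfin
    simp only [enorm_eq_nnnorm] at hfin
    rw [Measure.volume_eq_prod,
      MeasureTheory.lintegral_prod _ hmeas3.aemeasurable] at hfin
    exact ENNReal.mul_lt_top (lt_top_iff_ne_top.mpr (ENNReal.inv_ne_top.mpr hC0)) hfin

lemma fubini_radial (m : ℕ) (G : ℝ × ℝ → ℝ) (hG : Measurable G)
    (H : Integrable (fun q : ℝ × EuclideanSpace ℝ (Fin (m+1)) => G (q.1, ‖q.2‖))) :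
    ∫ q : ℝ × EuclideanSpace ℝ (Fin (m+1)), G (q.1, ‖q.2‖) =
      omegaMinus (m+2) * ∫ p in Set.univ ×ˢ Set.Ioi (0:ℝ), p.2 ^ m * G p := by
  have hP := prod_integrableOn m G hG H
  have hres : (volume : Measure (ℝ × ℝ)).restrict (Set.univ ×ˢ Set.Ioi (0:ℝ)) =
      (volume : Measure ℝ).prod ((volume : Measure ℝ).restrict (Set.Ioi (0:ℝ))) := by
    rw [Measure.volume_eq_prod, ← Measure.prod_restrict, Measure.restrict_univ]
  have hRHS : ∫ p in Set.univ ×ˢ Set.Ioi (0:ℝ), p.2 ^ m * G p =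
      ∫ t : ℝ, ∫ s in Set.Ioi (0:ℝ), s ^ m * G (t, s) := by
    rw [show (∫ p in Set.univ ×ˢ Set.Ioi (0:ℝ), p.2 ^ m * G p) =
      ∫ p : ℝ × ℝ, p.2 ^ m * G p ∂((volume : Measure (ℝ × ℝ)).restrict (Set.univ ×ˢ Set.Ioi (0:ℝ))) from rfl,
      hres, MeasureTheory.integral_prod]
    unfold IntegrableOn at hP
    rwa [hres] at hP
  rw [Measure.volume_eq_prod] at H
  rw [Measure.volume_eq_prod, MeasureTheory.integral_prod _ H, hRHS]
  have h1 : ∀ t : ℝ, (∫ w : EuclideanSpace ℝ (Fin (m+1)), G (t, ‖w‖)) =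
      omegaMinus (m+2) * ∫ s in Set.Ioi (0:ℝ), s ^ m * G (t, s) :=
    fun t => integral_radial m (fun s => G (t, s))
  simp_rw [h1]
  exact integral_const_mul _ _



lemma Dset_to_iterated {r : ℝ} (hr : 0 < r) (F : ℝ × ℝ → ℝ)
    (hF : IntegrableOn F (Dset r)) :
    ∫ p in Dset r, F p = ∫ ρ in Set.Ioi (0:ℝ), ∫ η in |ρ - r|..(ρ + r), F (ρ, η) := by
  rw [← MeasureTheory.integral_indicator (Dset_measurable r)]
  have hInd : Integrable ((Dset r).indicator F) :=
    (integrable_indicator_iff (Dset_measurable r)).mpr hF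
  rw [Measure.volume_eq_prod] at hInd ⊢
  rw [MeasureTheory.integral_prod _ hInd]
  have houter : ∀ ρ : ℝ, (∫ η : ℝ, (Dset r).indicator F (ρ, η)) =
      (Set.Ioi (0:ℝ)).indicator (fun ρ => ∫ η in |ρ - r|..(ρ + r), F (ρ, η)) ρ := by
    intro ρ
    by_cases hρ : 0 < ρ
    · rw [Set.indicator_of_mem (Set.mem_Ioi.mpr hρ)]
      have hle : |ρ - r| ≤ ρ + r := abs_le.mpr ⟨by linarith, by linarith⟩
      have hfun : (fun η => (Dset r).indicator F (ρ, η)) =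
          (Set.Ioo (|ρ - r|) (ρ + r)).indicator (fun η => F (ρ, η)) := by
        funext η
        by_cases hη : |ρ - r| < η ∧ η < ρ + r
        · rw [Set.indicator_of_mem (show (ρ, η) ∈ Dset r from ⟨hρ, hη.1, hη.2⟩),
            Set.indicator_of_mem (Set.mem_Ioo.mpr hη)]
        · rw [Set.indicator_of_notMem (fun hmem => hη ⟨hmem.2.1, hmem.2.2⟩),
            Set.indicator_of_notMem (fun hmem => hη ⟨hmem.1, hmem.2⟩)]
      rw [hfun, MeasureTheory.integral_indicator measurableSet_Ioo,
        intervalIntegral.integral_of_le hle, ← MeasureTheory.integral_Ioc_eq_integral_Ioo]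
    · rw [Set.indicator_of_notMem (fun hmem => hρ (Set.mem_Ioi.mp hmem))]
      have : (fun η => (Dset r).indicator F (ρ, η)) = fun _ => (0:ℝ) := by
        funext η
        exact Set.indicator_of_notMem (fun hmem => hρ hmem.1) F
      rw [this, integral_zero]
  simp_rw [houter]
  rw [MeasureTheory.integral_indicator measurableSet_Ioi]

lemma measurable_rpow_of_nonneg {α : Type*} [MeasurableSpace α] {f : α → ℝ}
    (hf : Measurable f) (h0 : ∀ a, 0 ≤ f a) (c : ℝ) :
    Measurable fun a => f a ^ c := by
  have hrw : (fun a => f a ^ c) = fun a =>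
      if f a = 0 then (if c = 0 then 1 else 0) else Real.exp (Real.log (f a) * c) := by
    funext a
    rcases eq_or_ne (f a) 0 with h|h
    · rw [h, if_pos rfl]
      rcases eq_or_ne c 0 with hc|hc
      · rw [hc, if_pos rfl, Real.rpow_zero]
      · rw [if_neg hc, Real.zero_rpow hc]
    · rw [if_neg h, Real.rpow_def_of_pos (lt_of_le_of_ne (h0 a) (Ne.symm h))]
  rw [hrw]
  exact Measurable.ite (hf (measurableSet_singleton 0)) measurable_const
    (Real.measurable_exp.comp ((Real.measurable_log.comp hf).mul_const c))

theorem stmt_15 (n : ℕ) (hn : 2 ≤ n) (γ : ℝ) (U : ℝ → ℝ) (hU : Measurable U)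
    (x : EuclideanSpace ℝ (Fin n)) (hx : 0 < ‖x‖)
    (hL : Integrable (fun y : EuclideanSpace ℝ (Fin n) => ‖x - y‖ ^ (-γ) * U ‖y‖))
    (hR : IntegrableOn
      (fun ρ : ℝ => ρ * U ρ * ∫ η in |ρ - ‖x‖|..(ρ + ‖x‖), η ^ (1 - γ) * hKer n η ρ ‖x‖)
      (Set.Ioi (0 : ℝ))) :
    (∫ y : EuclideanSpace ℝ (Fin n), ‖x - y‖ ^ (-γ) * U ‖y‖) =
      2 ^ (3 - (n : ℝ)) * omegaMinus n / ‖x‖ ^ ((n : ℝ) - 2) *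
        ∫ ρ in Set.Ioi (0 : ℝ),
          ρ * U ρ * ∫ η in |ρ - ‖x‖|..(ρ + ‖x‖), η ^ (1 - γ) * hKer n η ρ ‖x‖ := by
  clear hR
  obtain ⟨m, rfl⟩ : ∃ m, n = m + 2 := ⟨n - 2, by omega⟩
  clear hn
  -- Step 1: rotation
  have step1 : (∫ y : EuclideanSpace ℝ (Fin (m+2)), ‖x - y‖ ^ (-γ) * U ‖y‖)
      = ∫ y : EuclideanSpace ℝ (Fin (m+2)),
          ‖‖x‖ • EuclideanSpace.single (0 : Fin (m+2)) (1:ℝ) - y‖ ^ (-γ) * U ‖y‖ := by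
    rw [rotate_integral m x hx (fun y => ‖x - y‖ ^ (-γ) * U ‖y‖)]
    congr 1
    funext y
    rw [rot_norm_sub m x y hx, LinearIsometryEquiv.norm_map]
  have hL1 : Integrable (fun y : EuclideanSpace ℝ (Fin (m+2)) =>
      ‖‖x‖ • EuclideanSpace.single (0 : Fin (m+2)) (1:ℝ) - y‖ ^ (-γ) * U ‖y‖) := by
    have h2 := rotate_integrable m x _ hL
    have heq : (fun y => (fun z => ‖x - z‖ ^ (-γ) * U ‖z‖)
        ((Submodule.reflection (ℝ ∙ (x - ‖x‖ • EuclideanSpace.single (0 : Fin (m+2)) (1:ℝ)))ᗮ) y)) =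
        fun y => ‖‖x‖ • EuclideanSpace.single (0 : Fin (m+2)) (1:ℝ) - y‖ ^ (-γ) * U ‖y‖ := by
      funext y
      simp only
      rw [rot_norm_sub m x y hx, LinearIsometryEquiv.norm_map]
    rwa [heq] at h2
  set r := ‖x‖ with hrdef
  have hr : 0 < r := hx
  set G : ℝ × ℝ → ℝ := fun p =>
    Real.sqrt ((r - p.1)^2 + p.2^2) ^ (-γ) * U (Real.sqrt (p.1^2 + p.2^2)) with hGdef
  have hGmeas : Measurable G := by
    apply Measurable.mul
    · exact measurable_rpow_of_nonneg
        ((Real.continuous_sqrt.measurable).comp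
          (((measurable_const.sub measurable_fst).pow_const 2).add (measurable_snd.pow_const 2)))
        (fun a => Real.sqrt_nonneg _) (-γ)
    · exact hU.comp ((Real.continuous_sqrt.measurable).comp
        (((measurable_fst.pow_const 2)).add (measurable_snd.pow_const 2)))
  have hpsi : ∀ q : ℝ × EuclideanSpace ℝ (Fin (m+1)),
      ‖r • EuclideanSpace.single (0 : Fin (m+2)) (1:ℝ) - Psi m q‖ ^ (-γ) * U ‖Psi m q‖
        = G (q.1, ‖q.2‖) := by
    intro q
    rw [norm_sub_Psi, norm_Psi, hGdef]
  have step2 : (∫ y : EuclideanSpace ℝ (Fin (m+2)),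
      ‖r • EuclideanSpace.single (0 : Fin (m+2)) (1:ℝ) - y‖ ^ (-γ) * U ‖y‖)
      = ∫ q : ℝ × EuclideanSpace ℝ (Fin (m+1)), G (q.1, ‖q.2‖) := by
    rw [← MeasurePreserving.integral_comp (Psi_measurePreserving m)
      (Psi m).measurableEmbedding
      (fun y => ‖r • EuclideanSpace.single (0 : Fin (m+2)) (1:ℝ) - y‖ ^ (-γ) * U ‖y‖)]
    congr 1
    funext q
    exact hpsi q
  have H : Integrable (fun q : ℝ × EuclideanSpace ℝ (Fin (m+1)) => G (q.1, ‖q.2‖)) := by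
    have h3 := ((Psi_measurePreserving m).integrable_comp_emb
      (Psi m).measurableEmbedding).mpr hL1
    have heq : ((fun y => ‖r • EuclideanSpace.single (0 : Fin (m+2)) (1:ℝ) - y‖ ^ (-γ) * U ‖y‖)
        ∘ (Psi m)) = fun q : ℝ × EuclideanSpace ℝ (Fin (m+1)) => G (q.1, ‖q.2‖) :=
      funext hpsi
    rwa [heq] at h3
  have step3 := fubini_radial m G hGmeas H
  have step4 := cov_integral hr (fun p => p.2 ^ m * G p)
  set F : ℝ × ℝ → ℝ := fun p =>
    p.1 * U p.1 * (p.2 ^ ((1:ℝ)-γ) * hKer (m+2) p.2 p.1 r) with hFdef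
  set c1 : ℝ := (2:ℝ) ^ ((1:ℝ) - (m:ℝ)) * r ^ (-(m:ℝ)) with hc1def
  have hc1pos : 0 < c1 := by rw [hc1def]; positivity
  have hkey : ∀ p ∈ Dset r,
      |(Mder r p).det| • ((fun p => p.2 ^ m * G p) (Phi r p)) = c1 * F p := by
    intro p hp
    have := key_integrand (γ := γ) hr m U hp
    rw [hc1def, hFdef]
    rw [mul_assoc] at this ⊢
    convert this using 2
    rfl
  have step5 : (∫ p in Dset r, |(Mder r p).det| • ((fun p => p.2 ^ m * G p) (Phi r p)))
      = c1 * ∫ p in Dset r, F p := by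
    rw [setIntegral_congr_fun (Dset_measurable r) hkey]
    exact integral_const_mul _ _
  -- integrability of F on Dset r
  have hIOn : IntegrableOn (fun p : ℝ × ℝ => p.2 ^ m * G p) (Set.univ ×ˢ Set.Ioi (0:ℝ)) :=
    prod_integrableOn m G hGmeas H
  have hIOn2 := cov_integrableOn hr _ hIOn
  have hIOn3 : IntegrableOn (fun p => c1 * F p) (Dset r) :=
    (integrableOn_congr_fun hkey (Dset_measurable r)).mp hIOn2
  have hFint : IntegrableOn F (Dset r) := by
    have h4 := hIOn3.const_mul c1⁻¹
    have : (fun p => c1⁻¹ * (c1 * F p)) = F := by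
      funext p
      rw [← mul_assoc, inv_mul_cancel₀ hc1pos.ne', one_mul]
    rwa [this] at h4
  have step6 := Dset_to_iterated hr F hFint
  have step7 : (∫ ρ in Set.Ioi (0:ℝ), ∫ η in |ρ - r|..(ρ + r), F (ρ, η))
      = ∫ ρ in Set.Ioi (0:ℝ), ρ * U ρ * ∫ η in |ρ - r|..(ρ + r),
          η ^ ((1:ℝ)-γ) * hKer (m+2) η ρ r := by
    congr 1
    funext ρ
    rw [hFdef]
    simp only
    rw [intervalIntegral.integral_const_mul]
  rw [step1, step2, step3, step4, step5, step6, step7]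
  -- final constants
  have hcast1 : (2:ℝ) ^ ((3:ℝ) - ((m+2 : ℕ) : ℝ)) = (2:ℝ) ^ ((1:ℝ) - (m:ℝ)) := by
    congr 1
    push_cast
    ring
  have hcast2 : r ^ (((m+2 : ℕ) : ℝ) - 2) = r ^ ((m:ℝ)) := by
    congr 1
    push_cast
    ring
  rw [hcast1, hcast2, hc1def, Real.rpow_neg hr.le]
  have hrm : r ^ ((m:ℝ)) ≠ 0 := by positivity
  field_simp

end
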